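/- For every 1 ≤ i ≤ 2^ν, the element Ψ_{t_i} has order 3m = 3(3s₂ + 2^ν) in G(Σ, e); that is, 3m·Ψ_{t_i} = 0 and k·Ψ_{t_i} ≠ 0 for every integer 1 ≤ k < 3m. -/

import Mathlib

/-- The subgroup of relations: `e s • ψ s - e t • ψ t` for all `s t`, together with
`∑ s, ψ s`. -/
noncomputable def relSub {S : Type*} [Fintype S] (e : S → ℤ) : AddSubgroup (S →₀ ℤ) :=
  AddSubgroup.closure
    ({x | ∃ s t : S, x = Finsupp.single s (e s) - Finsupp.single t (e t)} ∪
      {∑ s : S, Finsupp.single s 1})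

/-- `G(Σ, e)`: the quotient of the free abelian group on `Σ` by the relations. -/
abbrev CompGrp {S : Type*} [Fintype S] (e : S → ℤ) : Type _ :=
  (S →₀ ℤ) ⧸ relSub e

/-- `Ψ s`: the image of the basis element `ψ s` in `G(Σ, e)`. -/
noncomputable def Psi {S : Type*} [Fintype S] (e : S → ℤ) (s : S) : CompGrp e :=
  QuotientAddGroup.mk (Finsupp.single s 1)

/-- `Σ = Σ₂ ⊔ Σ₆` with `#Σ₂ = s₂` and `#Σ₆ = 2^ν`. -/
abbrev Sig2 (s₂ ν : ℕ) : Type := Fin s₂ ⊕ Fin (2 ^ ν)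

/-- `e ≡ 1` on `Σ₂` and `e ≡ 3` on `Σ₆`. -/
def e2 (s₂ ν : ℕ) : Sig2 s₂ ν → ℤ := Sum.elim (fun _ => 1) (fun _ => 3)

/-- `t i` (`1`-based): the `i`-th point of `Σ₆ = {t_1, …, t_{2^ν}}`. -/
def tPt (s₂ ν : ℕ) (i : ℕ) : Sig2 s₂ ν :=
  Sum.inr ⟨(i - 1) % 2 ^ ν, Nat.mod_lt _ (Nat.pow_pos (by norm_num))⟩

/-- The generators `v_j` (`1`-based, `v_0 := Ψ 𝔰`):
`v_{2k-1} = Ψ t_{2k-1} - Ψ t_{2k}` and `v_{2k} = Ψ t_{2k-1} + Ψ t_{2k} - Ψ t - Ψ t'`,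
where `t = t_{2^ν - 1}` and `t' = t_{2^ν}`. -/
noncomputable def vGen (s₂ ν : ℕ) (𝔰 : Fin s₂) : ℕ → CompGrp (e2 s₂ ν) := fun j =>
  if j = 0 then Psi (e2 s₂ ν) (Sum.inl 𝔰)
  else if j % 2 = 1 then
    Psi (e2 s₂ ν) (tPt s₂ ν j) - Psi (e2 s₂ ν) (tPt s₂ ν (j + 1))
  else
    Psi (e2 s₂ ν) (tPt s₂ ν (j - 1)) + Psi (e2 s₂ ν) (tPt s₂ ν j)
      - Psi (e2 s₂ ν) (tPt s₂ ν (2 ^ ν - 1)) - Psi (e2 s₂ ν) (tPt s₂ ν (2 ^ ν))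

lemma psi_rel {S : Type*} [Fintype S] (e : S → ℤ) (s t : S) :
    (e s) • Psi e s = (e t) • Psi e t := by
  have h : ((Finsupp.single s (e s) - Finsupp.single t (e t) : S →₀ ℤ) : CompGrp e) = 0 :=
    (QuotientAddGroup.eq_zero_iff _).mpr (AddSubgroup.subset_closure (Or.inl ⟨s, t, rfl⟩))
  have h2 : ((Finsupp.single s (e s) : S →₀ ℤ) : CompGrp e)
      = ((Finsupp.single t (e t) : S →₀ ℤ) : CompGrp e) := by
    rwa [QuotientAddGroup.mk_sub, sub_eq_zero] at h
  simpa [Psi, ← QuotientAddGroup.mk_zsmul, Finsupp.smul_single] using h2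

lemma psi_sum {S : Type*} [Fintype S] (e : S → ℤ) : (∑ s : S, Psi e s) = 0 := by
  have h : ((∑ s : S, Finsupp.single s 1 : S →₀ ℤ) : CompGrp e) = 0 :=
    (QuotientAddGroup.eq_zero_iff _).mpr (AddSubgroup.subset_closure (Or.inr rfl))
  calc ∑ s : S, Psi e s = QuotientAddGroup.mk' (relSub e) (∑ s : S, Finsupp.single s 1) := by
        rw [map_sum]; rfl
    _ = 0 := h


/-- each `Ψ t_i` (`1 ≤ i ≤ 2^ν`) has order `3m = 3(3s₂ + 2^ν)`:
`3m • Ψ t_i = 0` and `k • Ψ t_i ≠ 0` for `1 ≤ k < 3m`. -/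
theorem stmt4 (s₂ ν : ℕ) (hs : 1 ≤ s₂) (hν : 1 ≤ ν) :
    ∀ i : ℕ, 1 ≤ i → i ≤ 2 ^ ν →
      addOrderOf (Psi (e2 s₂ ν) (tPt s₂ ν i)) = 3 * (3 * s₂ + 2 ^ ν) ∧
      (3 * (3 * s₂ + 2 ^ ν)) • Psi (e2 s₂ ν) (tPt s₂ ν i) = 0 ∧
      (∀ k : ℕ, 1 ≤ k → k < 3 * (3 * s₂ + 2 ^ ν) →
        k • Psi (e2 s₂ ν) (tPt s₂ ν i) ≠ 0) := by
  intro i hi1 hi2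
  have hn2 : 2 ≤ 2 ^ ν := by
    calc 2 = 2 ^ 1 := rfl
    _ ≤ 2 ^ ν := Nat.pow_le_pow_right (by norm_num) hν
  set T := Psi (e2 s₂ ν) (tPt s₂ ν i) with hT
  -- each Ψ on Σ₂ equals 3 • T, and 3•Ψ = 3•T on Σ₆
  have hA : ∀ a : Fin s₂, Psi (e2 s₂ ν) (Sum.inl a) = (3:ℤ) • T := by
    intro a
    have := psi_rel (e2 s₂ ν) (Sum.inl a) (tPt s₂ ν i)
    exact (one_zsmul _).symm.trans this
  have hB : ∀ b : Fin (2 ^ ν), (3:ℤ) • Psi (e2 s₂ ν) (Sum.inr b) = (3:ℤ) • T := by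
    intro b
    have := psi_rel (e2 s₂ ν) (Sum.inr b) (tPt s₂ ν i)
    rw [hT]; simpa [e2, tPt, one_zsmul] using this
  -- M • T = 0
  have key : (3 * (3 * s₂ + 2 ^ ν)) • T = 0 := by
    have h0 := congrArg (fun x : CompGrp (e2 s₂ ν) => (3:ℤ) • x) (psi_sum (e2 s₂ ν))
    simp only [Finset.smul_sum, smul_zero] at h0
    rw [Fintype.sum_sum_type] at h0
    have e1 : ∀ a : Fin s₂, (3:ℤ) • Psi (e2 s₂ ν) (Sum.inl a) = (9:ℤ) • T := by
      intro a; rw [hA a, smul_smul]; norm_num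
    rw [Finset.sum_congr rfl (fun a _ => e1 a), Finset.sum_congr rfl (fun b _ => hB b),
      Finset.sum_const, Finset.sum_const, Finset.card_univ, Finset.card_univ,
      Fintype.card_fin, Fintype.card_fin] at h0
    have h1 : ((3 * (3 * s₂ + 2 ^ ν) : ℕ) : ℤ) • T = 0 := by
      have h2 : ((3 * (3 * s₂ + 2 ^ ν) : ℕ) : ℤ) • T
          = (s₂ : ℤ) • ((9:ℤ) • T) + ((2 ^ ν : ℕ) : ℤ) • ((3:ℤ) • T) := by
        rw [smul_smul, smul_smul, ← add_zsmul]
        congr 1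
        push_cast
        ring
      rw [h2, natCast_zsmul, natCast_zsmul]
      exact h0
    rw [natCast_zsmul] at h1
    exact h1
  -- the detecting homomorphism into ZMod M
  set M := 3 * (3 * s₂ + 2 ^ ν) with hM
  have hMpos : 0 < M := by positivity
  set ii : Fin (2 ^ ν) := ⟨(i - 1) % 2 ^ ν, Nat.mod_lt _ (Nat.pow_pos (by norm_num))⟩
    with hii
  set j₀ : Fin (2 ^ ν) := if (i - 1) % 2 ^ ν = 0 then ⟨1, by omega⟩ else ⟨0, by omega⟩ with hj₀
  have hij : ii ≠ j₀ := by
    rw [hii, hj₀]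
    split <;> rename_i h <;> exact fun hc => by
      have := congrArg Fin.val hc
      simp at this
      omega
  set f : Sig2 s₂ ν → ZMod M :=
    Sum.elim (fun _ => 3) (fun j => if j = j₀ then 1 + 2 * ((3 * s₂ + 2 ^ ν : ℕ) : ZMod M) else 1)
    with hf
  have hMzero : ((M : ℕ) : ZMod M) = 0 := ZMod.natCast_self _
  have hf3 : ∀ s, (e2 s₂ ν s) • f s = 3 := by
    rintro (a | b)
    · simp [e2, hf]
    · simp only [e2, hf, Sum.elim_inr]
      split
      · rw [zsmul_eq_mul]
        have hMzero' : ((3 * (3 * s₂ + 2 ^ ν) : ℕ) : ZMod M) = 0 := by rw [← hM]; exact hMzero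
        push_cast at hMzero' ⊢
        linear_combination 2 * hMzero' 
      · simp
  set g : (Sig2 s₂ ν →₀ ℤ) →+ ZMod M :=
    Finsupp.liftAddHom (fun s => zmultiplesHom _ (f s)) with hg
  have hgs : ∀ (s : Sig2 s₂ ν) (c : ℤ), g (Finsupp.single s c) = c • f s := by
    intro s c
    rw [hg, Finsupp.liftAddHom_apply_single, zmultiplesHom_apply]
  have hker : relSub (e2 s₂ ν) ≤ g.ker := by
    rw [relSub, AddSubgroup.closure_le]
    rintro x (⟨s, t, rfl⟩ | rfl)
    · rw [SetLike.mem_coe, AddMonoidHom.mem_ker, map_sub, hgs, hgs, hf3, hf3, sub_self]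
    · rw [SetLike.mem_coe, AddMonoidHom.mem_ker, map_sum]
      have : ∀ s : Sig2 s₂ ν, g (Finsupp.single s 1) = f s := by
        intro s; rw [hgs, one_zsmul]
      rw [Finset.sum_congr rfl (fun s _ => this s), Fintype.sum_sum_type]
      simp only [hf, Sum.elim_inl, Sum.elim_inr]
      have hsplit : ∀ b : Fin (2 ^ ν),
          (if b = j₀ then (1 + 2 * ((3 * s₂ + 2 ^ ν : ℕ) : ZMod M)) else 1)
          = 1 + (if b = j₀ then 2 * ((3 * s₂ + 2 ^ ν : ℕ) : ZMod M) else 0) := by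
        intro b; split <;> simp
      rw [Finset.sum_congr rfl (fun b _ => hsplit b), Finset.sum_add_distrib,
        Finset.sum_ite_eq' Finset.univ j₀ (fun _ => 2 * ((3 * s₂ + 2 ^ ν : ℕ) : ZMod M)),
        Finset.sum_const, Finset.sum_const,
        Finset.card_univ, Finset.card_univ, Fintype.card_fin, Fintype.card_fin]
      simp only [Finset.mem_univ, if_pos, nsmul_eq_mul]
      have hMzero' : ((3 * (3 * s₂ + 2 ^ ν) : ℕ) : ZMod M) = 0 := by rw [← hM]; exact hMzero
      push_cast at hMzero' ⊢
      linear_combination hMzero' 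
  set φ : CompGrp (e2 s₂ ν) →+ ZMod M := QuotientAddGroup.lift _ g hker with hφ
  have hφT : φ T = 1 := by
    have h1 : φ T = g (Finsupp.single (tPt s₂ ν i) 1) := rfl
    rw [h1, hgs, one_zsmul]
    have : tPt s₂ ν i = Sum.inr ii := rfl
    rw [this, hf]
    simp [hij]
  have hdvd1 : M ∣ addOrderOf T := by
    have := addOrderOf_map_dvd φ T
    rwa [hφT, ZMod.addOrderOf_one] at this
  have hdvd2 : addOrderOf T ∣ M := addOrderOf_dvd_of_nsmul_eq_zero key
  have hord : addOrderOf T = M := Nat.dvd_antisymm hdvd2 hdvd1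
  refine ⟨hord, key, ?_⟩
  intro k hk1 hk2 hk0
  have := addOrderOf_dvd_of_nsmul_eq_zero hk0
  rw [hord] at this
  have := Nat.le_of_dvd (by omega) this
  omega
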